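/- Let M be a d×d complex matrix, F a 2d×2d Hermitian matrix with blocks [[F11,F12],[F12*,F22]], F22 > 0, and suppose (I_d, M*) F (I_d; M) ≤ 0 (negative semidefinite). If additionally F12 F22⁻¹ F12* − F11 is positive definite, then with 𝒞 := −F22⁻¹F12* and 𝒭 := F22^{-1/2}, 𝒭' := (F12F22⁻¹F12* − F11)^{1/2}, there exists V with V*V ≤ I_d such that M = 𝒞 + 𝒭 V 𝒭'. -/

import Mathlib

set_option maxHeartbeats 1600000


open Matrix
open scoped ComplexOrder MatrixOrder

theorem stmt19 (d : ℕ) (F11 F12 F22 M : Matrix (Fin d) (Fin d) ℂ)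
    (h11 : F11.IsHermitian) (h22 : F22.PosDef)
    (F : Matrix (Fin d ⊕ Fin d) (Fin d ⊕ Fin d) ℂ)
    (hF : F = Matrix.fromBlocks F11 F12 F12ᴴ F22)
    (hM : (-(Matrix.fromCols (1 : Matrix (Fin d) (Fin d) ℂ) Mᴴ * F * Matrix.fromRows (1 : Matrix (Fin d) (Fin d) ℂ) M)).PosSemidef)
    (hΔ : (F12 * F22⁻¹ * F12ᴴ - F11).PosDef) :
    ∃ V : Matrix (Fin d) (Fin d) ℂ, (1 - Vᴴ * V).PosSemidef ∧
      M = -(F22⁻¹ * F12ᴴ) + (CFC.sqrt F22)⁻¹ * V * CFC.sqrt (F12 * F22⁻¹ * F12ᴴ - F11) := by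
  have h22n : 0 ≤ F22 := Matrix.nonneg_iff_posSemidef.mpr h22.posSemidef
  have hΔn : 0 ≤ F12 * F22⁻¹ * F12ᴴ - F11 := Matrix.nonneg_iff_posSemidef.mpr hΔ.posSemidef
  set S := CFC.sqrt F22 with hSdef
  set T := CFC.sqrt (F12 * F22⁻¹ * F12ᴴ - F11) with hTdef
  have hSS : S * S = F22 := CFC.sqrt_mul_sqrt_self F22 h22n
  have hTT : T * T = F12 * F22⁻¹ * F12ᴴ - F11 := CFC.sqrt_mul_sqrt_self _ hΔn
  have hSH : Sᴴ = S := (CFC.sqrt_nonneg F22).isSelfAdjoint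
  have hTH : Tᴴ = T := (CFC.sqrt_nonneg (F12 * F22⁻¹ * F12ᴴ - F11)).isSelfAdjoint
  have hSdet : IsUnit S.det := by
    have h : S.det * S.det = F22.det := by rw [← det_mul, hSS]
    exact isUnit_iff_ne_zero.mpr (fun h0 => h22.det_pos.ne' (by rw [← h, h0, mul_zero]))
  have hTdet : IsUnit T.det := by
    have h : T.det * T.det = (F12 * F22⁻¹ * F12ᴴ - F11).det := by rw [← det_mul, hTT]
    exact isUnit_iff_ne_zero.mpr (fun h0 => hΔ.det_pos.ne' (by rw [← h, h0, mul_zero]))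
  have hSinv : S⁻¹ * S = 1 := nonsing_inv_mul S hSdet
  have hTinv : T⁻¹ * T = 1 := nonsing_inv_mul T hTdet
  have hTinv' : T * T⁻¹ = 1 := mul_nonsing_inv T hTdet
  have h22u : IsUnit F22.det := h22.det_pos.ne'.isUnit
  have h22inv : F22⁻¹ * F22 = 1 := nonsing_inv_mul F22 h22u
  have h22inv' : F22 * F22⁻¹ = 1 := mul_nonsing_inv F22 h22u
  have h22iH : (F22⁻¹)ᴴ = F22⁻¹ := h22.isHermitian.inv
  clear_value S T
  obtain ⟨N, hNdef⟩ : ∃ N : Matrix (Fin d) (Fin d) ℂ, N = M + F22⁻¹ * F12ᴴ := ⟨_, rfl⟩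
  refine ⟨S * N * T⁻¹, ?_, ?_⟩
  · -- contraction
    have hMexp : (-(F11 + F12 * M + Mᴴ * F12ᴴ + Mᴴ * (F22 * M))).PosSemidef := by
      have := hM
      rw [hF, Matrix.mul_assoc, fromBlocks_mul_fromRows, fromCols_mul_fromRows] at this
      simpa [mul_add, Matrix.mul_assoc, add_assoc] using this
    have key : (T * T - Nᴴ * F22 * N) = -(F11 + F12 * M + Mᴴ * F12ᴴ + Mᴴ * (F22 * M)) := by
      rw [hTT, hNdef]
      have hNH : (M + F22⁻¹ * F12ᴴ)ᴴ = Mᴴ + F12 * F22⁻¹ := by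
        simp [conjTranspose_add, conjTranspose_mul, h22iH]
      rw [hNH]
      have e1 : (Mᴴ + F12 * F22⁻¹) * F22 = Mᴴ * F22 + F12 := by
        rw [add_mul, mul_assoc, h22inv, mul_one]
      rw [e1, add_mul, mul_add, mul_add]
      have e2 : F12 * (F22⁻¹ * F12ᴴ) = F12 * F22⁻¹ * F12ᴴ := by rw [mul_assoc]
      have e3 : Mᴴ * F22 * (F22⁻¹ * F12ᴴ) = Mᴴ * F12ᴴ := by
        rw [mul_assoc, ← mul_assoc F22, h22inv', one_mul]
      rw [e2, e3]
      have e4 : Mᴴ * F22 * M = Mᴴ * (F22 * M) := by rw [mul_assoc]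
      rw [e4]
      abel
    have hpsd : (T * T - Nᴴ * F22 * N).PosSemidef := by rw [key]; exact hMexp
    have := hpsd.conjTranspose_mul_mul_same T⁻¹
    have heq : (T⁻¹)ᴴ * (T * T - Nᴴ * F22 * N) * T⁻¹ = 1 - (S * N * T⁻¹)ᴴ * (S * N * T⁻¹) := by
      have hTiH : (T⁻¹)ᴴ = T⁻¹ := by rw [conjTranspose_nonsing_inv, hTH]
      rw [hTiH]
      simp only [conjTranspose_mul, conjTranspose_nonsing_inv, hTH, hSH]
      rw [mul_sub, sub_mul]
      congr 1
      · rw [← Matrix.mul_assoc, hTinv, one_mul, hTinv']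
      · simp only [Matrix.mul_assoc]
        rw [← Matrix.mul_assoc S S, hSS]
    rwa [heq] at this
  · -- the equation
    rw [hNdef]
    rw [mul_assoc (S⁻¹), mul_assoc, hTinv, mul_one, ← mul_assoc, hSinv, one_mul]
    simp [hNdef]
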